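/- For every a > 0 and b ∈ (0,1), if {x_0, x_1, …, x_{n-1}} is a periodic orbit of f_{a,b} contained in (0,1) (i.e., x_{k+1} = f_{a,b}(x_k) for k < n−1 and f_{a,b}(x_{n-1}) = x_0, with all x_k ∈ (0,1)), then its center of mass equals b: (x_0 + x_1 + ⋯ + x_{n-1})/n = b. -/

import Mathlib

/-- The map `f_{a,b}(x) = x / (x + (1-x) * exp (a (x - b)))`. -/
noncomputable def chaosMap (a b : ℝ) : ℝ → ℝ :=
  fun x => x / (x + (1 - x) * Real.exp (a * (x - b)))

lemma chaosMap_logit (a b x : ℝ) (hx : x ∈ Set.Ioo (0 : ℝ) 1) :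
    Real.log (chaosMap a b x / (1 - chaosMap a b x))
      = Real.log (x / (1 - x)) - a * (x - b) := by
  obtain ⟨h0, h1⟩ := hx
  have h1' : 0 < 1 - x := by linarith
  set E := Real.exp (a * (x - b)) with hE
  have hEpos : 0 < E := Real.exp_pos _
  have hD : 0 < x + (1 - x) * E := by positivity
  have hf : chaosMap a b x = x / (x + (1 - x) * E) := rfl
  have h1f : 1 - chaosMap a b x = ((1 - x) * E) / (x + (1 - x) * E) := by
    rw [hf]; field_simp; ring
  have hratio : chaosMap a b x / (1 - chaosMap a b x) = x / ((1 - x) * E) := by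
    rw [h1f, hf]
    field_simp
  rw [hratio, Real.log_div h0.ne' (by positivity), Real.log_div h0.ne' h1'.ne',
    Real.log_mul h1'.ne' hEpos.ne', hE, Real.log_exp]
  ring

/-- For every `a > 0` and `b ∈ (0,1)`, the center of mass of every periodic
orbit `{x_0, …, x_{n-1}}` of `f_{a,b}` contained in `(0,1)` equals `b`. -/
theorem stmt_3 (a b : ℝ) (ha : 0 < a) (hb : b ∈ Set.Ioo (0 : ℝ) 1)
    (n : ℕ) (hn : 0 < n) (x : ℕ → ℝ)
    (hmem : ∀ k < n, x k ∈ Set.Ioo (0 : ℝ) 1)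
    (hstep : ∀ k, k + 1 < n → x (k + 1) = chaosMap a b (x k))
    (hcycle : chaosMap a b (x (n - 1)) = x 0) :
    (∑ k ∈ Finset.range n, x k) / n = b := by
  set Y : ℕ → ℝ := fun k => Real.log (x (k % n) / (1 - x (k % n))) with hY
  have hstep' : ∀ k < n, Y k - Y (k + 1) = a * (x k - b) := by
    intro k hk
    have hkmod : k % n = k := Nat.mod_eq_of_lt hk
    by_cases hk1 : k + 1 < n
    · have hk1mod : (k + 1) % n = k + 1 := Nat.mod_eq_of_lt hk1
      have := chaosMap_logit a b (x k) (hmem k hk)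
      simp only [hY, hkmod, hk1mod, hstep k hk1, this]
      ring
    · have hkn : k = n - 1 := by omega
      have hk1n : k + 1 = n := by omega
      have hmod0 : (k + 1) % n = 0 := by rw [hk1n]; exact Nat.mod_self n
      have h0n : 0 % n = 0 := Nat.zero_mod n
      have := chaosMap_logit a b (x k) (hmem k hk)
      rw [hkn, hcycle] at this
      simp only [hY, hkmod, hmod0, Nat.zero_mod]
      rw [hkn, this]
      ring
  have htel : ∑ k ∈ Finset.range n, (Y k - Y (k + 1)) = Y 0 - Y n :=
    Finset.sum_range_sub' Y n
  have hYn : Y n = Y 0 := by simp [hY, Nat.mod_self]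
  have hsum : ∑ k ∈ Finset.range n, a * (x k - b) = 0 := by
    have hc := Finset.sum_congr rfl (fun k hk => hstep' k (Finset.mem_range.mp hk))
    rw [← hc, htel, hYn]
    ring
  have hsum2 : ∑ k ∈ Finset.range n, x k = n * b := by
    have e : ∑ k ∈ Finset.range n, a * (x k - b)
        = a * (∑ k ∈ Finset.range n, x k) - n * (a * b) := by
      simp [mul_sub, Finset.sum_sub_distrib, ← Finset.mul_sum]
    rw [e] at hsum
    have : a * (∑ k ∈ Finset.range n, x k) = a * (n * b) := by ring_nf; ring_nf at hsum; linarith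
    exact mul_left_cancel₀ ha.ne' this
  rw [hsum2]
  field_simp
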